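/- Let N be a reticulation-visible phylogenetic network on X containing a cherry {a, b}, and let N' be obtained from N by reducing this cherry (deleting a and b with their incident arcs, and relabelling their common parent, now a leaf, by a new element). Then N' is a reticulation-visible phylogenetic network on (X \ {a,b}) ∪ {new label}. -/

import Mathlib

/-- A directed graph with a distinguished vertex set, arc set and root,
intended to model (binary) phylogenetic networks. Since arcs form a
`Finset` of ordered pairs, there are no parallel arcs. -/
structure Net (V : Type) [DecidableEq V] where
  verts : Finset V
  arcs : Finset (V × V)
  root : V

variable {V : Type} [DecidableEq V]

namespace Net

def Arc (N : Net V) (u v : V) : Prop := (u, v) ∈ N.arcs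

def outdeg (N : Net V) (v : V) : ℕ := (N.arcs.filter (fun e => e.1 = v)).card

def indeg (N : Net V) (v : V) : ℕ := (N.arcs.filter (fun e => e.2 = v)).card

def IsLeaf (N : Net V) (v : V) : Prop := v ∈ N.verts ∧ N.outdeg v = 0

def IsRetic (N : Net V) (v : V) : Prop :=
  v ∈ N.verts ∧ N.indeg v = 2 ∧ N.outdeg v = 1

def IsTreeVtx (N : Net V) (v : V) : Prop :=
  v ∈ N.verts ∧ N.indeg v = 1 ∧ N.outdeg v = 2

/-- The set of leaves (out-degree-zero vertices); this is the taxa set `X`. -/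
def leaves (N : Net V) : Finset V := N.verts.filter (fun v => N.outdeg v = 0)

/-- The set of reticulation vertices. -/
def retics (N : Net V) : Finset V :=
  N.verts.filter (fun v => N.indeg v = 2 ∧ N.outdeg v = 1)

/-- `u` is an ancestor of `v`: there is a directed path from `u` to `v`.
(Reflexive, as in the reachability order.) -/
def Ancestor (N : Net V) (u v : V) : Prop := Relation.ReflTransGen N.Arc u v

/-- `IsPathList N u v l` : `l` is the list of vertices of a directed path
from `u` to `v` in `N`. -/
inductive IsPathList (N : Net V) : V → V → List V → Prop
  | nil (v : V) : IsPathList N v v [v]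
  | cons {u w x : V} {l : List V} : N.Arc u w → IsPathList N w x l →
      IsPathList N u x (u :: l)

/-- The leaf `ℓ` verifies the vertex `v`: every directed path from the root
to `ℓ` passes through `v`. -/
def Verifies (N : Net V) (ℓ v : V) : Prop :=
  ∀ l : List V, N.IsPathList N.root ℓ l → v ∈ l

def Visible (N : Net V) (v : V) : Prop := ∃ ℓ, N.IsLeaf ℓ ∧ N.Verifies ℓ v

def ReticVisible (N : Net V) : Prop := ∀ v, N.IsRetic v → N.Visible v

/-- `N` is a (binary) phylogenetic network: a rooted acyclic digraph with no
parallel arcs in which the root has in-degree zero and out-degree two, every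
other vertex is a leaf (in-degree one, out-degree zero), a tree vertex
(in-degree one, out-degree two) or a reticulation (in-degree two, out-degree
one); if there is a single vertex the network has no arcs. -/
def IsPhylo (N : Net V) : Prop :=
  N.root ∈ N.verts ∧
  (∀ e ∈ N.arcs, e.1 ∈ N.verts ∧ e.2 ∈ N.verts) ∧
  (∀ v : V, ¬ Relation.TransGen N.Arc v v) ∧
  (∀ v ∈ N.verts, N.Ancestor N.root v) ∧
  (if N.verts.card = 1 then N.arcs = ∅
   else
    N.indeg N.root = 0 ∧ N.outdeg N.root = 2 ∧
    ∀ v ∈ N.verts, v ≠ N.root →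
      (N.indeg v = 1 ∧ N.outdeg v = 0) ∨
      (N.indeg v = 1 ∧ N.outdeg v = 2) ∨
      (N.indeg v = 2 ∧ N.outdeg v = 1))

end Net

private theorem pathlist_mono {V : Type} [DecidableEq V] {N M : Net V}
    (h : N.arcs ⊆ M.arcs) {u v : V} {l : List V}
    (hp : N.IsPathList u v l) : M.IsPathList u v l := by
  induction hp with
  | nil x => exact .nil x
  | cons ha _ ih => exact .cons (h ha) ih

private theorem pathlist_append {V : Type} [DecidableEq V] {N : Net V}
    {u v w : V} {l : List V} (hp : N.IsPathList u v l) (hvw : N.Arc v w) :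
    N.IsPathList u w (l ++ [w]) := by
  induction hp with
  | nil x => exact .cons hvw (.nil w)
  | cons h _ ih => exact .cons h (ih hvw)

/-- Reducing a cherry `{a, b}` of a reticulation-visible phylogenetic
network (deleting `a` and `b` together with their incident arcs; their
common parent `p` becomes a leaf, which receives the new label) yields a
reticulation-visible phylogenetic network in which `p` is a leaf. -/
theorem stmt_5 {V : Type} [DecidableEq V] (N : Net V)
    (hphylo : N.IsPhylo) (hrv : N.ReticVisible)
    (a b p : V) (hab : a ≠ b)
    (ha : N.IsLeaf a) (hb : N.IsLeaf b)
    (hpa : N.Arc p a) (hpb : N.Arc p b) :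
    let N' : Net V :=
      ⟨(N.verts.erase a).erase b,
       N.arcs.filter (fun e => e.1 ≠ a ∧ e.1 ≠ b ∧ e.2 ≠ a ∧ e.2 ≠ b),
       N.root⟩
    N'.IsPhylo ∧ N'.ReticVisible ∧ N'.IsLeaf p ∧
      N'.leaves = (N.leaves.erase a).erase b ∪ {p} := by
  intro N'
  have hN'arcs : N'.arcs
      = N.arcs.filter (fun e => e.1 ≠ a ∧ e.1 ≠ b ∧ e.2 ≠ a ∧ e.2 ≠ b) := rfl
  have hN'verts : N'.verts = (N.verts.erase a).erase b := rfl
  have hN'root : N'.root = N.root := rfl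
  obtain ⟨hrootv, harcv, hacyc, hreach, hrest⟩ := hphylo
  have hav : a ∈ N.verts := ha.1
  have hbv : b ∈ N.verts := hb.1
  have hpv : p ∈ N.verts := (harcv _ hpa).1
  -- no arcs leave a or b
  have hnoa : ∀ e ∈ N.arcs, e.1 ≠ a := by
    intro e he h1
    have h0 := ha.2
    rw [Net.outdeg, Finset.card_eq_zero] at h0
    have : e ∈ N.arcs.filter (fun e => e.1 = a) := Finset.mem_filter.mpr ⟨he, h1⟩
    simp [h0] at this
  have hnob : ∀ e ∈ N.arcs, e.1 ≠ b := by
    intro e he h1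
    have h0 := hb.2
    rw [Net.outdeg, Finset.card_eq_zero] at h0
    have : e ∈ N.arcs.filter (fun e => e.1 = b) := Finset.mem_filter.mpr ⟨he, h1⟩
    simp [h0] at this
  have hpa' : p ≠ a := hnoa (p, a) hpa
  have hpb' : p ≠ b := hnob (p, b) hpb
  have hcard1 : N.verts.card ≠ 1 := by
    have : 1 < N.verts.card := Finset.one_lt_card.mpr ⟨a, hav, b, hbv, hab⟩
    omega
  rw [if_neg hcard1] at hrest
  obtain ⟨hir, hor, hclass⟩ := hrest
  have haroot : a ≠ N.root := by
    intro h
    have : (p, a) ∈ N.arcs.filter (fun e => e.2 = N.root) :=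
      Finset.mem_filter.mpr ⟨hpa, h⟩
    have h0 := hir
    rw [Net.indeg, Finset.card_eq_zero] at h0
    simp [h0] at this
  have hbroot : b ≠ N.root := by
    intro h
    have : (p, b) ∈ N.arcs.filter (fun e => e.2 = N.root) :=
      Finset.mem_filter.mpr ⟨hpb, h⟩
    have h0 := hir
    rw [Net.indeg, Finset.card_eq_zero] at h0
    simp [h0] at this
  have hindega : N.indeg a = 1 := by
    rcases hclass a hav haroot with h | h | h
    · exact h.1
    · exact absurd (ha.2.symm.trans h.2) (by norm_num)
    · exact absurd (ha.2.symm.trans h.2) (by norm_num)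
  have hindegb : N.indeg b = 1 := by
    rcases hclass b hbv hbroot with h | h | h
    · exact h.1
    · exact absurd (hb.2.symm.trans h.2) (by norm_num)
    · exact absurd (hb.2.symm.trans h.2) (by norm_num)
  -- only arc into a is (p,a); similarly for b
  have hina : ∀ e ∈ N.arcs, e.2 = a → e = (p, a) := by
    intro e he h2
    exact Finset.card_le_one.mp (le_of_eq hindega) e
      (Finset.mem_filter.mpr ⟨he, h2⟩) (p, a) (Finset.mem_filter.mpr ⟨hpa, rfl⟩)
  have hinb : ∀ e ∈ N.arcs, e.2 = b → e = (p, b) := by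
    intro e he h2
    exact Finset.card_le_one.mp (le_of_eq hindegb) e
      (Finset.mem_filter.mpr ⟨he, h2⟩) (p, b) (Finset.mem_filter.mpr ⟨hpb, rfl⟩)
  -- outdeg p = 2, and the out-arcs of p are exactly (p,a),(p,b)
  have hpairsub : ({(p, a), (p, b)} : Finset (V × V))
      ⊆ N.arcs.filter (fun e => e.1 = p) := by
    intro e he
    simp only [Finset.mem_insert, Finset.mem_singleton] at he
    rcases he with rfl | rfl
    · exact Finset.mem_filter.mpr ⟨hpa, rfl⟩
    · exact Finset.mem_filter.mpr ⟨hpb, rfl⟩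
  have hpaircard : ({(p, a), (p, b)} : Finset (V × V)).card = 2 := by
    rw [Finset.card_insert_of_notMem (by simp [hab]), Finset.card_singleton]
  have houtp2 : N.outdeg p = 2 := by
    have h2 : 2 ≤ N.outdeg p := by
      rw [← hpaircard]; exact Finset.card_le_card hpairsub
    by_cases hpr : p = N.root
    · rw [hpr]; exact hor
    · rcases hclass p hpv hpr with h | h | h <;> omega
  have houtparcs : N.arcs.filter (fun e => e.1 = p) = {(p, a), (p, b)} :=
    (Finset.eq_of_subset_of_card_le hpairsub (by rw [hpaircard]; exact houtp2.le)).symm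
  -- N'.arcs ⊆ N.arcs
  have hsubarcs : N'.arcs ⊆ N.arcs := by
    rw [hN'arcs]; exact Finset.filter_subset _ _
  -- degree preservation
  have hout_eq : ∀ v : V, v ≠ p → N'.outdeg v = N.outdeg v := by
    intro v hvp
    unfold Net.outdeg
    congr 1
    rw [hN'arcs]
    ext e
    simp only [Finset.mem_filter, and_assoc]
    constructor
    · rintro ⟨he, _, _, _, _, h1⟩; exact ⟨he, h1⟩
    · rintro ⟨he, h1⟩
      refine ⟨he, hnoa e he, hnob e he, ?_, ?_, h1⟩
      · intro h2
        have := hina e he h2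
        apply hvp; rw [← h1, this]
      · intro h2
        have := hinb e he h2
        apply hvp; rw [← h1, this]
  have hin_eq : ∀ v : V, v ≠ a → v ≠ b → N'.indeg v = N.indeg v := by
    intro v hva hvb
    unfold Net.indeg
    congr 1
    rw [hN'arcs]
    ext e
    simp only [Finset.mem_filter, and_assoc]
    constructor
    · rintro ⟨he, _, _, _, _, h2⟩; exact ⟨he, h2⟩
    · rintro ⟨he, h2⟩
      exact ⟨he, hnoa e he, hnob e he, by rw [h2]; exact hva, by rw [h2]; exact hvb, h2⟩
  -- p has out-degree 0 in N'
  have houtp0 : N'.outdeg p = 0 := by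
    rw [Net.outdeg, Finset.card_eq_zero, Finset.eq_empty_iff_forall_notMem]
    intro e heM
    rw [Finset.mem_filter, hN'arcs, Finset.mem_filter] at heM
    obtain ⟨⟨he, _, _, h2a, h2b⟩, h1⟩ := heM
    have : e ∈ N.arcs.filter (fun e => e.1 = p) := Finset.mem_filter.mpr ⟨he, h1⟩
    rw [houtparcs] at this
    simp only [Finset.mem_insert, Finset.mem_singleton] at this
    rcases this with rfl | rfl
    · exact h2a rfl
    · exact h2b rfl
  have hpv' : p ∈ N'.verts := by
    rw [hN'verts]
    exact Finset.mem_erase.mpr ⟨hpb', Finset.mem_erase.mpr ⟨hpa', hpv⟩⟩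
  have hpleaf' : N'.IsLeaf p := ⟨hpv', houtp0⟩
  -- reachability transfers to N'
  have hreach' : ∀ v : V, Relation.ReflTransGen N.Arc N.root v → v ≠ a → v ≠ b →
      Relation.ReflTransGen N'.Arc N.root v := by
    intro v h
    induction h with
    | refl => intro _ _; exact Relation.ReflTransGen.refl
    | @tail u w hru harc ih =>
      intro hwa hwb
      have hua : u ≠ a := hnoa (u, w) harc
      have hub : u ≠ b := hnob (u, w) harc
      refine Relation.ReflTransGen.tail (ih hua hub) ?_
      show (u, w) ∈ N'.arcs
      rw [hN'arcs]
      exact Finset.mem_filter.mpr ⟨harc, hua, hub, hwa, hwb⟩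
  have hends : ∀ e ∈ N'.arcs, e.1 ∈ N'.verts ∧ e.2 ∈ N'.verts := by
    intro e he
    rw [hN'arcs, Finset.mem_filter] at he
    obtain ⟨he, h1a, h1b, h2a, h2b⟩ := he
    obtain ⟨hv1, hv2⟩ := harcv e he
    rw [hN'verts]
    exact ⟨Finset.mem_erase.mpr ⟨h1b, Finset.mem_erase.mpr ⟨h1a, hv1⟩⟩,
      Finset.mem_erase.mpr ⟨h2b, Finset.mem_erase.mpr ⟨h2a, hv2⟩⟩⟩
  have hrootv' : N.root ∈ N'.verts := by
    rw [hN'verts]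
    exact Finset.mem_erase.mpr ⟨fun h => hbroot h.symm,
      Finset.mem_erase.mpr ⟨fun h => haroot h.symm, hrootv⟩⟩
  have hcard2 : N'.verts.card = N.verts.card - 2 := by
    rw [hN'verts, Finset.card_erase_of_mem (Finset.mem_erase.mpr ⟨hab.symm, hbv⟩),
      Finset.card_erase_of_mem hav]
    omega
  -- IsPhylo for N'
  have hphylo' : N'.IsPhylo := by
    refine ⟨hrootv', hends, ?_, ?_, ?_⟩
    · intro v hcyc
      exact hacyc v (Relation.TransGen.mono (fun x y h => hsubarcs h) _ _ hcyc)
    · intro v hv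
      rw [hN'verts, Finset.mem_erase, Finset.mem_erase] at hv
      exact hreach' v (hreach v hv.2.2) hv.2.1 hv.1
    · by_cases hc1 : N'.verts.card = 1
      · rw [if_pos hc1]
        obtain ⟨x, hx⟩ := Finset.card_eq_one.mp hc1
        have hxroot : x = N.root := by
          have := hrootv'
          rw [hx, Finset.mem_singleton] at this
          exact this.symm
        subst hxroot
        rw [Finset.eq_empty_iff_forall_notMem]
        intro e he
        obtain ⟨hv1, hv2⟩ := hends e he
        rw [hx, Finset.mem_singleton] at hv1 hv2
        obtain ⟨x, y⟩ := e
        simp only at hv1 hv2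
        subst hv1; subst hv2
        exact hacyc N.root (Relation.TransGen.single (hsubarcs he))
      · rw [if_neg hc1]
        -- first: the root is not p
        have hrootp : N.root ≠ p := by
          intro hrp
          have hsmall : ∀ v : V, Relation.ReflTransGen N.Arc N.root v →
              v = N.root ∨ v = a ∨ v = b := by
            intro v h
            induction h with
            | refl => exact Or.inl rfl
            | @tail u w hru harc ih =>
              rcases ih with h1 | h1 | h1
              · have hm : (u, w) ∈ N.arcs.filter (fun e => e.1 = p) :=
                  Finset.mem_filter.mpr ⟨harc, h1.trans hrp⟩
                rw [houtparcs] at hm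
                simp only [Finset.mem_insert, Finset.mem_singleton,
                  Prod.mk.injEq] at hm
                rcases hm with ⟨_, h2⟩ | ⟨_, h2⟩
                · exact Or.inr (Or.inl h2)
                · exact Or.inr (Or.inr h2)
              · exact absurd h1 (hnoa (u, w) harc)
              · exact absurd h1 (hnob (u, w) harc)
          have hsub3 : N.verts ⊆ {N.root, a, b} := by
            intro v hv
            rcases hsmall v (hreach v hv) with rfl | rfl | rfl <;> simp
          have h3 : N.verts.card ≤ 3 := by
            calc N.verts.card ≤ ({N.root, a, b} : Finset V).card :=
                  Finset.card_le_card hsub3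
              _ ≤ 3 := by
                  refine le_trans (Finset.card_insert_le _ _) ?_
                  have := Finset.card_insert_le a ({b} : Finset V)
                  simp at this ⊢
                  omega
          have hpos : 0 < N'.verts.card := Finset.card_pos.mpr ⟨N.root, hrootv'⟩
          omega
        refine ⟨?_, ?_, ?_⟩
        · rw [hin_eq N.root (fun h => haroot h.symm) (fun h => hbroot h.symm)]
          exact hir
        · rw [hout_eq N.root hrootp]; exact hor
        · intro v hv hvroot
          rw [hN'verts, Finset.mem_erase, Finset.mem_erase] at hv
          obtain ⟨hvb', hva', hvN⟩ := hv
          have hvroot' : v ≠ N.root := hvroot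
          by_cases hvp : v = p
          · subst hvp
            left
            refine ⟨?_, houtp0⟩
            rw [hin_eq v hpa' hpb']
            rcases hclass v hvN hvroot' with h | h | h
            · exact h.1
            · exact h.1
            · exact absurd (houtp2.symm.trans h.2) (by norm_num)
          · rw [hin_eq v hva' hvb', hout_eq v hvp]
            exact hclass v hvN hvroot'
  refine ⟨hphylo', ?_, hpleaf', ?_⟩
  · -- reticulation visibility
    intro v hv
    obtain ⟨hvV', hvi, hvo⟩ := hv
    have hvp : v ≠ p := by
      intro h; rw [h, houtp0] at hvo; exact absurd hvo (by norm_num)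
    rw [hN'verts, Finset.mem_erase, Finset.mem_erase] at hvV'
    obtain ⟨hvb', hva', hvN⟩ := hvV'
    have hretN : N.IsRetic v :=
      ⟨hvN, (hin_eq v hva' hvb').symm.trans hvi, (hout_eq v hvp).symm.trans hvo⟩
    obtain ⟨ℓ, hℓleaf, hℓver⟩ := hrv v hretN
    by_cases hℓa : ℓ = a
    · refine ⟨p, hpleaf', ?_⟩
      intro l hl
      have hlN : N.IsPathList N.root p l := pathlist_mono hsubarcs hl
      have := hℓver (l ++ [a]) (by rw [hℓa] at *; exact pathlist_append hlN hpa)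
      rw [List.mem_append, List.mem_singleton] at this
      rcases this with h | h
      · exact h
      · exact absurd h hva'
    · by_cases hℓb : ℓ = b
      · refine ⟨p, hpleaf', ?_⟩
        intro l hl
        have hlN : N.IsPathList N.root p l := pathlist_mono hsubarcs hl
        have := hℓver (l ++ [b]) (by rw [hℓb] at *; exact pathlist_append hlN hpb)
        rw [List.mem_append, List.mem_singleton] at this
        rcases this with h | h
        · exact h
        · exact absurd h hvb'
      · have hℓp : ℓ ≠ p := by
          intro h
          have := hℓleaf.2
          rw [h, houtp2] at this
          exact absurd this (by norm_num)
        refine ⟨ℓ, ⟨?_, (hout_eq ℓ hℓp).trans hℓleaf.2⟩, ?_⟩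
        · rw [hN'verts]
          exact Finset.mem_erase.mpr ⟨hℓb, Finset.mem_erase.mpr ⟨hℓa, hℓleaf.1⟩⟩
        · intro l hl
          exact hℓver l (pathlist_mono hsubarcs hl)
  · -- leaves
    ext v
    simp only [Net.leaves, Finset.mem_union, Finset.mem_singleton,
      Finset.mem_filter, Finset.mem_erase, hN'verts]
    constructor
    · rintro ⟨⟨hvb', hva', hvN⟩, hvo⟩
      by_cases hvp : v = p
      · exact Or.inr hvp
      · exact Or.inl ⟨hvb', hva', ⟨hvN, (hout_eq v hvp).symm.trans hvo⟩⟩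
    · rintro (⟨hvb', hva', hvN, hvo⟩ | rfl)
      · have hvp : v ≠ p := by
          intro h; rw [h, houtp2] at hvo; exact absurd hvo (by norm_num)
        exact ⟨⟨hvb', hva', hvN⟩, (hout_eq v hvp).trans hvo⟩
      · exact ⟨⟨hpb', hpa', hpv⟩, houtp0⟩
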